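/- With the data and hypotheses listed in the context (Z reflexive with compact embedding into O, finite-dimensional kernel G of A, gap from the discrete kernels Gₙ to G tending to 0 in Z-norm, stability of aₙ in Z-norms on the orthogonal complement of Gₙ, strengthened consistency of aₙ with convergence in Z, consistency of cₙ in Z-norms, and injectivity with dense range of A + C∘ι), there exist c′ > 0 and N such that for all n ≥ N and all u ∈ Xₙ, c′ ‖u‖_Z ≤ sup over nonzero v ∈ Xₙ of |aₙ(u, v) + cₙ(u, v)| / ‖v‖_Z; that is, the perturbed discrete forms satisfy the strengthened (Z-norm) stability inf–sup condition for n large enough. -/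

import Mathlib

open scoped RealInnerProductSpace
open Filter
set_option maxHeartbeats 2000000

noncomputable def gapSet {E : Type*} [NormedAddCommGroup E] (S T : Set E) : ℝ :=
  ⨆ u : {u : E // u ∈ S ∧ ‖u‖ = 1}, ⨅ v : T, ‖u.1 - v.1‖

section helpers
variable {Z : Type*} [NormedAddCommGroup Z] [NormedSpace ℝ Z]

lemma sup_div_bddAbove (X : Submodule ℝ Z) [FiniteDimensional ℝ X] (f : X →ₗ[ℝ] ℝ) :
    BddAbove (Set.range fun v : {v : X // v ≠ 0} => |f v.1| / ‖(v.1 : Z)‖) := by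
  obtain ⟨M, hM⟩ : ∃ M : ℝ, ∀ v : X, |f v| ≤ M * ‖v‖ := by
    refine ⟨‖LinearMap.toContinuousLinearMap f‖, fun v => ?_⟩
    simpa [Real.norm_eq_abs] using (LinearMap.toContinuousLinearMap f).le_opNorm v
  refine ⟨M, ?_⟩
  rintro x ⟨v, rfl⟩
  have hv : (0:ℝ) < ‖(v.1 : Z)‖ := by
    simpa [norm_pos_iff, Submodule.coe_eq_zero] using v.2
  rw [div_le_iff₀ hv]
  exact hM v.1

lemma sup_div_nonneg (X : Submodule ℝ Z) (f : {v : X // v ≠ 0} → ℝ) :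
    0 ≤ ⨆ v : {v : X // v ≠ 0}, |f v| / ‖((v:X) : Z)‖ :=
  Real.iSup_nonneg fun v => div_nonneg (abs_nonneg _) (norm_nonneg _)

lemma le_sup_div (X : Submodule ℝ Z) [FiniteDimensional ℝ X] (f : X →ₗ[ℝ] ℝ) (v : X) :
    |f v| ≤ (⨆ w : {w : X // w ≠ 0}, |f w.1| / ‖(w.1 : Z)‖) * ‖(v : Z)‖ := by
  rcases eq_or_ne v 0 with rfl | hv
  · simp
  · have h1 : |f v| / ‖(v : Z)‖ ≤ ⨆ w : {w : X // w ≠ 0}, |f w.1| / ‖(w.1 : Z)‖ :=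
      le_ciSup (sup_div_bddAbove X f) ⟨v, hv⟩
    have hv' : (0:ℝ) < ‖(v : Z)‖ := by
      simpa [norm_pos_iff, Submodule.coe_eq_zero] using hv
    calc |f v| = |f v| / ‖(v : Z)‖ * ‖(v : Z)‖ := by field_simp
    _ ≤ _ := mul_le_mul_of_nonneg_right h1 (norm_nonneg _)

lemma sup_div_le (X : Submodule ℝ Z) (f : X →ₗ[ℝ] ℝ) {M : ℝ} (hM : 0 ≤ M)
    (h : ∀ v : X, |f v| ≤ M * ‖(v : Z)‖) :
    (⨆ v : {v : X // v ≠ 0}, |f v.1| / ‖(v.1 : Z)‖) ≤ M := by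
  refine Real.iSup_le (fun v => ?_) hM
  have hv : (0:ℝ) < ‖(v.1 : Z)‖ := by
    simpa [norm_pos_iff, Submodule.coe_eq_zero] using v.2
  rw [div_le_iff₀ hv]
  exact h v.1

end helpers

lemma gapSet_nonneg {E : Type*} [NormedAddCommGroup E] (S T : Set E) : 0 ≤ gapSet S T :=
  Real.iSup_nonneg fun _ => Real.iInf_nonneg fun _ => norm_nonneg _

lemma gapSet_bound {E : Type*} [NormedAddCommGroup E] {S T : Set E} (h0 : (0:E) ∈ T)
    {u : E} (hu : u ∈ S) (hu1 : ‖u‖ = 1) {η : ℝ} (hη : 0 < η) :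
    ∃ v ∈ T, ‖u - v‖ < gapSet S T + η := by
  have hTne : Nonempty T := ⟨⟨0, h0⟩⟩
  have h1 : (⨅ v : T, ‖u - v.1‖) ≤ gapSet S T := by
    refine le_ciSup (f := fun u : {u : E // u ∈ S ∧ ‖u‖ = 1} => ⨅ v : T, ‖u.1 - v.1‖) ?_ ⟨u, hu, hu1⟩
    refine ⟨1, ?_⟩
    rintro x ⟨w, rfl⟩
    have : (⨅ v : T, ‖w.1 - v.1‖) ≤ ‖w.1 - (0:E)‖ :=
      ciInf_le (⟨0, by rintro x ⟨v, rfl⟩; exact norm_nonneg _⟩ : BddBelow (Set.range fun v : T => ‖w.1 - v.1‖)) ⟨0, h0⟩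
    simpa [w.2.2] using this
  have h2 : (⨅ v : T, ‖u - v.1‖) < gapSet S T + η := lt_of_le_of_lt h1 (by linarith)
  obtain ⟨v, hv⟩ := exists_lt_of_ciInf_lt h2
  exact ⟨v.1, v.2, hv⟩
theorem perturbed_strengthened_stability
    {O Y Z : Type*}
    [NormedAddCommGroup O] [InnerProductSpace ℝ O] [CompleteSpace O]
    [NormedAddCommGroup Y] [NormedSpace ℝ Y] [CompleteSpace Y]
    [NormedAddCommGroup Z] [NormedSpace ℝ Z] [CompleteSpace Z]
    -- `Z` is reflexive
    (hrefl : Function.Surjective (NormedSpace.inclusionInDoubleDual ℝ Z))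
    (j : Z →L[ℝ] O) (hjinj : Function.Injective j) (hjcomp : IsCompactOperator j)
    (k : Y →L[ℝ] Z) (ι : Y →L[ℝ] O) (hjk : ∀ u : Y, j (k u) = ι u)
    (hιinj : Function.Injective ι) (hιd : DenseRange ι)
    (A : Y →L[ℝ] O) (hAsym : ∀ u v : Y, ⟪A u, ι v⟫ = ⟪A v, ι u⟫)
    (C : O →L[ℝ] O) (hCsym : ∀ x y : O, ⟪C x, y⟫ = ⟪x, C y⟫)
    (hACinj : Function.Injective (fun u : Y => A u + C (ι u)))
    (hACdr : DenseRange (fun u : Y => A u + C (ι u)))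
    (X : ℕ → Submodule ℝ Z) (hXfd : ∀ n, FiniteDimensional ℝ (X n))
    (aN cN : ∀ n, X n →ₗ[ℝ] X n →ₗ[ℝ] ℝ)
    (haNsym : ∀ n (u v : X n), aN n u v = aN n v u)
    (hcNsym : ∀ n (u v : X n), cN n u v = cN n v u)
    -- `G` is the (finite-dimensional) kernel of `A`
    (hGfd : FiniteDimensional ℝ (LinearMap.ker (A : Y →ₗ[ℝ] O)))
    -- (i) the gap in `Z`-norm from `Gₙ` to `k(G)` tends to `0`
    (hgap : Tendsto (fun n =>
        gapSet ((fun g : X n => (g : Z)) '' {g : X n | ∀ v : X n, aN n g v = 0})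
          ((fun y : Y => k y) '' {y : Y | A y = 0}))
      atTop (nhds 0))
    -- (ii) `Z`-norm stability of `aₙ` on the orthogonal complement `X̃ₙ` of `Gₙ`
    (hstab : ∃ c : ℝ, 0 < c ∧ ∀ n (u : X n),
      (∀ g : X n, (∀ v : X n, aN n g v = 0) → ⟪j (u : Z), j (g : Z)⟫ = 0) →
      c * ‖(u : Z)‖ ≤ ⨆ v : {v : X n // v ≠ 0}, |aN n u v.1| / ‖(v.1 : Z)‖)
    -- (iii) strengthened consistency of `aₙ` with `a`
    (hconsist : ∃ Yinf : Submodule ℝ Y, Dense (Yinf : Set Y) ∧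
      ∀ u ∈ Yinf, ∃ useq : (n : ℕ) → X n,
        Tendsto (fun n => ‖((useq n : X n) : Z) - k u‖) atTop (nhds 0) ∧
        Tendsto (fun n => ⨆ v : {v : X n // v ≠ 0},
          |⟪A u, j (v.1 : Z)⟫ - aN n (useq n) v.1| / ‖(v.1 : Z)‖) atTop (nhds 0))
    -- (iv) `Z`-norm consistency of `cₙ` with `C`
    (hcN : ∃ ε : ℕ → ℝ, Tendsto ε atTop (nhds 0) ∧
      ∀ n (u v : X n), |⟪C (j (u : Z)), j (v : Z)⟫ - cN n u v| ≤ ε n * ‖(u : Z)‖ * ‖(v : Z)‖) :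
    ∃ c' : ℝ, 0 < c' ∧ ∃ N : ℕ, ∀ n ≥ N, ∀ u : X n,
      c' * ‖(u : Z)‖ ≤
        ⨆ v : {v : X n // v ≠ 0}, |aN n u v.1 + cN n u v.1| / ‖(v.1 : Z)‖ := by
  classical
  obtain ⟨c, hcpos, hstab'⟩ := hstab
  obtain ⟨Yinf, hYd, hYc⟩ := hconsist
  obtain ⟨ε, hε0, hεb⟩ := hcN
  haveI := hXfd
  by_contra hcon
  push_neg at hcon
  -- bound on ε
  obtain ⟨E₀, hE₀⟩ : ∃ E₀ : ℝ, ∀ i, ε i ≤ E₀ := by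
    obtain ⟨E₀, hE₀⟩ := hε0.bddAbove_range
    exact ⟨E₀, fun i => hE₀ ⟨i, rfl⟩⟩
  have hE₀0 : (0:ℝ) ≤ E₀ := le_of_tendsto hε0 (Eventually.of_forall hE₀)
  -- uniform bound on cN
  have hip : ∀ i (u v : X i), |⟪C (j (u:Z)), j (v:Z)⟫| ≤ ‖C (j (u:Z))‖ * ‖j‖ * ‖(v:Z)‖ := by
    intro i u v
    have h2 : |⟪C (j (u:Z)), j (v:Z)⟫| ≤ ‖C (j (u:Z))‖ * ‖j (v:Z)‖ := abs_real_inner_le_norm _ _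
    have h3 : ‖j (v:Z)‖ ≤ ‖j‖ * ‖(v:Z)‖ := j.le_opNorm _
    nlinarith [norm_nonneg (C (j (u:Z))), norm_nonneg (j (v:Z))]
  have hcNb : ∀ i (u v : X i), |cN i u v| ≤ (‖C‖ * ‖j‖ * ‖j‖ + E₀) * ‖(u:Z)‖ * ‖(v:Z)‖ := by
    intro i u v
    have h1 : |cN i u v| ≤ |⟪C (j (u:Z)), j (v:Z)⟫| + |⟪C (j (u:Z)), j (v:Z)⟫ - cN i u v| := by
      calc |cN i u v|
          = |⟪C (j (u:Z)), j (v:Z)⟫ + (cN i u v - ⟪C (j (u:Z)), j (v:Z)⟫)| := by congr 1; ring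
        _ ≤ |⟪C (j (u:Z)), j (v:Z)⟫| + |cN i u v - ⟪C (j (u:Z)), j (v:Z)⟫| := abs_add_le _ _
        _ = _ := by rw [abs_sub_comm]
    have h2 := hip i u v
    have h4 : ‖C (j (u:Z))‖ ≤ ‖C‖ * (‖j‖ * ‖(u:Z)‖) := by
      calc ‖C (j (u:Z))‖ ≤ ‖C‖ * ‖j (u:Z)‖ := C.le_opNorm _
      _ ≤ ‖C‖ * (‖j‖ * ‖(u:Z)‖) := by
        exact mul_le_mul_of_nonneg_left (j.le_opNorm _) (norm_nonneg C)
    have h5 := hεb i u v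
    have h6 : ε i * ‖(u:Z)‖ * ‖(v:Z)‖ ≤ E₀ * ‖(u:Z)‖ * ‖(v:Z)‖ :=
      mul_le_mul_of_nonneg_right
        (mul_le_mul_of_nonneg_right (hE₀ i) (norm_nonneg _)) (norm_nonneg _)
    have h7 : ‖C (j (u:Z))‖ * ‖j‖ * ‖(v:Z)‖ ≤ ‖C‖ * ‖j‖ * ‖j‖ * ‖(u:Z)‖ * ‖(v:Z)‖ := by
      have h := mul_le_mul_of_nonneg_right h4
        (mul_nonneg j.opNorm_nonneg (norm_nonneg ((v:Z))))
      calc ‖C (j (u:Z))‖ * ‖j‖ * ‖(v:Z)‖ = ‖C (j (u:Z))‖ * (‖j‖ * ‖(v:Z)‖) := by ring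
        _ ≤ ‖C‖ * (‖j‖ * ‖(u:Z)‖) * (‖j‖ * ‖(v:Z)‖) := h
        _ = ‖C‖ * ‖j‖ * ‖j‖ * ‖(u:Z)‖ * ‖(v:Z)‖ := by ring
    have hexp : (‖C‖ * ‖j‖ * ‖j‖ + E₀) * ‖(u:Z)‖ * ‖(v:Z)‖
        = ‖C‖ * ‖j‖ * ‖j‖ * ‖(u:Z)‖ * ‖(v:Z)‖ + E₀ * ‖(u:Z)‖ * ‖(v:Z)‖ := by ring
    rw [hexp]
    linarith [h1, h2, h5, h6, h7]
  -- extraction of the bad sequence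
  have H : ∀ m : ℕ, ∃ i, m ≤ i ∧ ∃ u : X i, ‖(u : Z)‖ = 1 ∧
      (⨆ v : {v : X i // v ≠ 0}, |(aN i u + cN i u) v.1| / ‖(v.1 : Z)‖) ≤ ((m:ℝ)+1)⁻¹ := by
    intro m
    have hpos : (0:ℝ) < ((m:ℝ)+1)⁻¹ := by positivity
    obtain ⟨i, hi, u0, hu0⟩ := hcon ((m:ℝ)+1)⁻¹ hpos m
    have hSrw : (⨆ v : {v : X i // v ≠ 0}, |aN i u0 v.1 + cN i u0 v.1| / ‖(v.1 : Z)‖)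
        = ⨆ v : {v : X i // v ≠ 0}, |(aN i u0 + cN i u0) v.1| / ‖(v.1 : Z)‖ := rfl
    rw [hSrw] at hu0
    have hu0ne : u0 ≠ 0 := by
      rintro rfl
      have h0 : (0:ℝ) ≤ ⨆ v : {v : X i // v ≠ 0}, |(aN i 0 + cN i 0) v.1| / ‖(v.1 : Z)‖ :=
        Real.iSup_nonneg fun v => div_nonneg (abs_nonneg _) (norm_nonneg _)
    -- norm of 0 is 0
      simp only [Submodule.coe_zero, norm_zero, mul_zero] at hu0
      exact absurd hu0 (not_lt.mpr h0)
    have hn0 : (0:ℝ) < ‖(u0 : Z)‖ := by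
      simpa [norm_pos_iff, Submodule.coe_eq_zero] using hu0ne
    refine ⟨i, hi, (‖(u0:Z)‖⁻¹ : ℝ) • u0, ?_, ?_⟩
    · rw [Submodule.coe_smul, norm_smul]
      simp [abs_of_pos (inv_pos.mpr hn0), inv_mul_cancel₀ hn0.ne']
    · refine sup_div_le (X i) _ (le_of_lt hpos) ?_
      intro v
      have hlin : (aN i ((‖(u0:Z)‖⁻¹ : ℝ) • u0) + cN i ((‖(u0:Z)‖⁻¹ : ℝ) • u0)) v
          = ‖(u0:Z)‖⁻¹ * ((aN i u0 + cN i u0) v) := by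
        simp [map_smul, mul_add]
      rw [hlin, abs_mul, abs_of_pos (inv_pos.mpr hn0)]
      have hptw : |(aN i u0 + cN i u0) v| ≤
          (⨆ w : {w : X i // w ≠ 0}, |(aN i u0 + cN i u0) w.1| / ‖(w.1 : Z)‖) * ‖(v : Z)‖ :=
        le_sup_div (X i) _ v
      have : |(aN i u0 + cN i u0) v| ≤ ((m:ℝ)+1)⁻¹ * ‖(u0:Z)‖ * ‖(v : Z)‖ :=
        hptw.trans (by
          have := mul_le_mul_of_nonneg_right (le_of_lt hu0) (norm_nonneg ((v : Z)))
          linarith)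
      calc ‖(u0:Z)‖⁻¹ * |(aN i u0 + cN i u0) v|
          ≤ ‖(u0:Z)‖⁻¹ * (((m:ℝ)+1)⁻¹ * ‖(u0:Z)‖ * ‖(v : Z)‖) := by
            exact mul_le_mul_of_nonneg_left this (by positivity)
        _ = ((m:ℝ)+1)⁻¹ * ‖(v : Z)‖ := by field_simp
  choose n hn u hu1 hu2 using H
  -- kernels of the discrete forms as submodules
  have GsubDef : ∀ i, ∃ P : Submodule ℝ (X i), ∀ g, g ∈ P ↔ ∀ v, aN i g v = 0 := fun i =>
    ⟨⨅ v : X i, LinearMap.ker ((aN i).flip v), fun g => by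
      simp [Submodule.mem_iInf, LinearMap.mem_ker]⟩
  choose Gsub hGsub using GsubDef
  -- orthogonal (w.r.t. the O-inner product through j) decomposition
  have hdecomp : ∀ m, ∃ g : X (n m), (∀ v, aN (n m) g v = 0) ∧
      ∀ g' : X (n m), (∀ v, aN (n m) g' v = 0) →
        ⟪j ((u m : Z) - (g : Z)), j (g' : Z)⟫ = 0 := by
    intro m
    set K : Submodule ℝ O :=
      (Gsub (n m)).map ((j.toLinearMap).comp (X (n m)).subtype) with hK
    haveI : FiniteDimensional ℝ K := Module.Finite.map _ _
    obtain ⟨g, hgmem, hgeq⟩ :=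
      Submodule.mem_map.mp (K.orthogonalProjectionOnto (j ((u m : Z)))).2
    refine ⟨g, (hGsub _ g).mp hgmem, ?_⟩
    intro g' hg'
    have hmem : j ((g' : Z)) ∈ K := ⟨g', (hGsub _ g').mpr hg', rfl⟩
    have horth := Submodule.starProjection_inner_eq_zero (K := K) (j ((u m : Z))) (j ((g' : Z))) hmem
    have hgeq' : j ((g : Z)) = (K.orthogonalProjectionOnto (j ((u m : Z))) : O) := hgeq
    rw [map_sub, hgeq']
    exact horth
  choose g hgker hgorth using hdecomp
  -- the discrete kernel part of the form vanishes
  have hfeq : ∀ m, aN (n m) (u m - g m) = aN (n m) (u m) := by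
    intro m
    have hz : aN (n m) (g m) = 0 := LinearMap.ext fun v => hgker m v
    rw [map_sub, hz, sub_zero]
  -- uniform bound on the complement part
  have hsup1 : ∀ m (v : X (n m)), |(aN (n m) (u m) + cN (n m) (u m)) v|
      ≤ ((m:ℝ)+1)⁻¹ * ‖(v : Z)‖ := by
    intro m v
    have h := le_sup_div (X (n m)) (aN (n m) (u m) + cN (n m) (u m)) v
    exact h.trans (mul_le_mul_of_nonneg_right (hu2 m) (norm_nonneg _))
  have hstabb : ∀ m, c * ‖((u m : Z) - (g m : Z))‖
      ≤ ((m:ℝ)+1)⁻¹ + (‖C‖ * ‖j‖ * ‖j‖ + E₀) := by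
    intro m
    have horthcond : ∀ g' : X (n m), (∀ v, aN (n m) g' v = 0) →
        ⟪j ((u m - g m : X (n m)) : Z), j ((g' : Z))⟫ = 0 := by
      intro g' hg'
      have := hgorth m g' hg'
      simpa using this
    have h1 := hstab' (n m) (u m - g m) horthcond
    have hcoe : (((u m - g m : X (n m))) : Z) = (u m : Z) - (g m : Z) := rfl
    rw [hcoe] at h1
    refine h1.trans ?_
    refine sup_div_le (X (n m)) _ ?_ ?_
    · have : (0:ℝ) ≤ ((m:ℝ)+1)⁻¹ := by positivity
      have h2 : (0:ℝ) ≤ ‖C‖ * ‖j‖ * ‖j‖ + E₀ := by positivity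
      linarith
    · intro v
      have hv1 : |aN (n m) (u m - g m) v| = |aN (n m) (u m) v| := by rw [hfeq m]
      rw [hv1]
      have h3 : |aN (n m) (u m) v| ≤ |(aN (n m) (u m) + cN (n m) (u m)) v|
          + |cN (n m) (u m) v| := by
        have : aN (n m) (u m) v
            = (aN (n m) (u m) + cN (n m) (u m)) v - cN (n m) (u m) v := by
          simp
        rw [this]
        exact abs_sub _ _
      have h4 := hsup1 m v
      have h5 := hcNb (n m) (u m) v
      rw [hu1 m] at h5
      have h5' : |cN (n m) (u m) v| ≤ (‖C‖ * ‖j‖ * ‖j‖ + E₀) * ‖(v : Z)‖ := by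
        calc |cN (n m) (u m) v| ≤ (‖C‖ * ‖j‖ * ‖j‖ + E₀) * 1 * ‖(v : Z)‖ := h5
          _ = (‖C‖ * ‖j‖ * ‖j‖ + E₀) * ‖(v : Z)‖ := by ring
      calc |aN (n m) (u m) v| ≤ ((m:ℝ)+1)⁻¹ * ‖(v : Z)‖
            + (‖C‖ * ‖j‖ * ‖j‖ + E₀) * ‖(v : Z)‖ := by linarith
        _ = (((m:ℝ)+1)⁻¹ + (‖C‖ * ‖j‖ * ‖j‖ + E₀)) * ‖(v : Z)‖ := by ring
  -- uniform norm bounds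
  set B : ℝ := c⁻¹ * (1 + (‖C‖ * ‖j‖ * ‖j‖ + E₀)) with hBdef
  have hB0 : 0 ≤ B := by positivity
  have hu'B : ∀ m, ‖(u m : Z) - (g m : Z)‖ ≤ B := by
    intro m
    have h1 := hstabb m
    have h2 : ((m:ℝ)+1)⁻¹ ≤ 1 := by
      rw [inv_le_one_iff₀]
      right; push_cast; linarith [Nat.cast_nonneg (α := ℝ) m]
    rw [← le_div_iff₀' hcpos] at h1
    calc ‖(u m : Z) - (g m : Z)‖ ≤ (((m:ℝ)+1)⁻¹ + (‖C‖ * ‖j‖ * ‖j‖ + E₀)) / c := h1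
      _ ≤ (1 + (‖C‖ * ‖j‖ * ‖j‖ + E₀)) / c := by gcongr
      _ = B := by rw [hBdef, div_eq_inv_mul]
  have hgB : ∀ m, ‖(g m : Z)‖ ≤ 1 + B := by
    intro m
    have : (g m : Z) = (u m : Z) - ((u m : Z) - (g m : Z)) := by abel
    rw [this]
    calc ‖(u m : Z) - ((u m : Z) - (g m : Z))‖
        ≤ ‖(u m : Z)‖ + ‖(u m : Z) - (g m : Z)‖ := norm_sub_le _ _
      _ ≤ 1 + B := by rw [hu1 m]; linarith [hu'B m]
  -- approximate the discrete kernel elements by elements of k(G)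
  set δ : ℕ → ℝ := fun i =>
    gapSet ((fun g : X i => (g : Z)) '' {g : X i | ∀ v : X i, aN i g v = 0})
      ((fun y : Y => k y) '' {y : Y | A y = 0}) with hδdef
  have hδ0 : ∀ i, 0 ≤ δ i := fun i => gapSet_nonneg _ _
  have hnt : Tendsto n atTop atTop := tendsto_atTop_mono hn tendsto_id
  have hδn : Tendsto (fun m => δ (n m)) atTop (nhds 0) := hgap.comp hnt
  have hδseq : Tendsto (fun m => δ (n m) + ((m:ℝ)+1)⁻¹) atTop (nhds 0) := by
    have h2 : Tendsto (fun m : ℕ => ((m:ℝ)+1)⁻¹) atTop (nhds 0) := by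
      have := tendsto_one_div_add_atTop_nhds_zero_nat (𝕜 := ℝ)
      simpa [one_div] using this
    simpa using hδn.add h2
  have hy : ∀ m, ∃ y : Y, A y = 0 ∧
      ‖(g m : Z) - k y‖ ≤ (δ (n m) + ((m:ℝ)+1)⁻¹) * ‖(g m : Z)‖ := by
    intro m
    rcases eq_or_ne (g m) 0 with h0 | hne
    · refine ⟨0, by simp, ?_⟩
      rw [h0]
      simp
    · have hgn : (0:ℝ) < ‖(g m : Z)‖ := by
        simpa [norm_pos_iff, Submodule.coe_eq_zero] using hne
      have hmemS : (‖(g m : Z)‖⁻¹ : ℝ) • (g m : Z) ∈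
          ((fun g : X (n m) => (g : Z)) '' {g : X (n m) | ∀ v : X (n m), aN (n m) g v = 0}) := by
        refine ⟨(‖(g m : Z)‖⁻¹ : ℝ) • g m, ?_, rfl⟩
        intro v
        rw [map_smul]
        simp [hgker m v]
      have hT0 : (0:Z) ∈ ((fun y : Y => k y) '' {y : Y | A y = 0}) :=
        ⟨0, by simp, by simp⟩
      have hnorm1 : ‖(‖(g m : Z)‖⁻¹ : ℝ) • (g m : Z)‖ = 1 := by
        rw [norm_smul]
        simp [abs_of_pos (inv_pos.mpr hgn), inv_mul_cancel₀ hgn.ne']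
      have hη : (0:ℝ) < ((m:ℝ)+1)⁻¹ := by positivity
      obtain ⟨v, hvT, hvlt⟩ := gapSet_bound hT0 hmemS hnorm1 hη
      obtain ⟨y₀, hy₀A, hy₀k⟩ := hvT
      refine ⟨(‖(g m : Z)‖ : ℝ) • y₀, by rw [map_smul, hy₀A, smul_zero], ?_⟩
      have hkey : (g m : Z) - k ((‖(g m : Z)‖ : ℝ) • y₀)
          = (‖(g m : Z)‖ : ℝ) • ((‖(g m : Z)‖⁻¹ : ℝ) • (g m : Z) - v) := by
        rw [map_smul, ← hy₀k]
        rw [smul_sub, smul_smul, mul_inv_cancel₀ hgn.ne', one_smul]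
      rw [hkey, norm_smul, Real.norm_eq_abs, abs_of_pos hgn]
      calc ‖(g m : Z)‖ * ‖(‖(g m : Z)‖⁻¹ : ℝ) • (g m : Z) - v‖
          ≤ ‖(g m : Z)‖ * (δ (n m) + ((m:ℝ)+1)⁻¹) :=
            mul_le_mul_of_nonneg_left (le_of_lt hvlt) (le_of_lt hgn)
        _ = (δ (n m) + ((m:ℝ)+1)⁻¹) * ‖(g m : Z)‖ := mul_comm _ _
  choose y hyA hyb using hy
  -- k(y m) is bounded
  obtain ⟨Dδ, hDδ⟩ : ∃ Dδ : ℝ, ∀ m, δ (n m) + ((m:ℝ)+1)⁻¹ ≤ Dδ := by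
    obtain ⟨Dδ, hDδ⟩ := hδseq.bddAbove_range
    exact ⟨Dδ, fun m => hDδ ⟨m, rfl⟩⟩
  have hkyB : ∀ m, ‖k (y m)‖ ≤ (1 + B) + Dδ * (1 + B) := by
    intro m
    have h1 : ‖k (y m)‖ ≤ ‖(g m : Z)‖ + ‖(g m : Z) - k (y m)‖ :=
      calc ‖k (y m)‖ = ‖(g m : Z) - ((g m : Z) - k (y m))‖ := by rw [sub_sub_cancel]
        _ ≤ ‖(g m : Z)‖ + ‖(g m : Z) - k (y m)‖ := norm_sub_le _ _
    have h2 := hyb m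
    have h3 : (δ (n m) + ((m:ℝ)+1)⁻¹) * ‖(g m : Z)‖ ≤ Dδ * (1 + B) := by
      have hδm0 : 0 ≤ δ (n m) + ((m:ℝ)+1)⁻¹ := by
        have := hδ0 (n m); positivity
      have := mul_le_mul (hDδ m) (hgB m) (norm_nonneg _) (le_trans hδm0 (hDδ m))
      exact this
    linarith [hgB m]
  -- first subsequence: k(y m) converges in the finite-dimensional space k(G)
  set KG : Submodule ℝ Z := (LinearMap.ker (A : Y →ₗ[ℝ] O)).map (k : Y →ₗ[ℝ] Z) with hKGdef
  haveI : FiniteDimensional ℝ KG := Module.Finite.map _ _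
  set D : ℝ := (1 + B) + Dδ * (1 + B) with hDdef
  have hky' : ∀ m, (⟨k (y m), ⟨y m, by simpa [LinearMap.mem_ker] using hyA m, rfl⟩⟩ : KG)
      ∈ Metric.closedBall (0 : KG) D := by
    intro m
    rw [Metric.mem_closedBall, dist_zero_right]
    exact hkyB m
  obtain ⟨zK, hzKmem, φ₁, hφ₁mono, hφ₁tendsto⟩ :=
    (isCompact_closedBall (0 : KG) D).tendsto_subseq hky'
  have hky1 : Tendsto (fun m => k (y (φ₁ m))) atTop (nhds (zK : Z)) :=
    ((continuous_subtype_val.tendsto zK).comp hφ₁tendsto)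
  -- g converges along φ₁
  have hgky0 : Tendsto (fun m => ‖(g m : Z) - k (y m)‖) atTop (nhds 0) := by
    have hb : ∀ m, ‖(g m : Z) - k (y m)‖ ≤ (δ (n m) + ((m:ℝ)+1)⁻¹) * (1 + B) := fun m =>
      (hyb m).trans (mul_le_mul_of_nonneg_left (hgB m) (by have := hδ0 (n m); positivity))
    have hlim : Tendsto (fun m => (δ (n m) + ((m:ℝ)+1)⁻¹) * (1 + B)) atTop (nhds 0) := by
      simpa using hδseq.mul_const (1 + B)
    exact squeeze_zero (fun m => norm_nonneg _) hb hlim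
  have hgz1 : Tendsto (fun m => (g (φ₁ m) : Z)) atTop (nhds (zK : Z)) := by
    have h1 : Tendsto (fun m => (g (φ₁ m) : Z) - k (y (φ₁ m))) atTop (nhds 0) := by
      have := (squeeze_zero_norm (fun m => le_of_eq rfl) hgky0).comp hφ₁mono.tendsto_atTop
      exact this
    have := h1.add hky1
    simpa using this
  -- second subsequence: j(u - g) converges in O via compactness
  obtain ⟨Kc, hKccomp, hKcnhds⟩ := hjcomp
  obtain ⟨r, hr, hball⟩ := Metric.mem_nhds_iff.mp hKcnhds
  set t : ℝ := r / (2 * (B + 1)) with htdef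
  have ht : 0 < t := by positivity
  have hmemKc : ∀ m, t • j ((u (φ₁ m) : Z) - (g (φ₁ m) : Z)) ∈ Kc := by
    intro m
    have h1 : ‖t • ((u (φ₁ m) : Z) - (g (φ₁ m) : Z))‖ < r := by
      rw [norm_smul, Real.norm_eq_abs, abs_of_pos ht]
      have h2 := hu'B (φ₁ m)
      have h3 : t * ‖(u (φ₁ m) : Z) - (g (φ₁ m) : Z)‖ ≤ t * B :=
        mul_le_mul_of_nonneg_left h2 ht.le
      have h4 : t * B < r := by
        rw [htdef, div_mul_eq_mul_div, div_lt_iff₀ (by positivity : (0:ℝ) < 2 * (B + 1))]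
        nlinarith [hB0, hr]
      linarith
    have hmem := hball (mem_ball_zero_iff.mpr h1)
    have : j (t • ((u (φ₁ m) : Z) - (g (φ₁ m) : Z)))
        = t • j ((u (φ₁ m) : Z) - (g (φ₁ m) : Z)) := map_smul j t _
    rw [← this]
    exact hmem
  obtain ⟨w₀, hw₀mem, φ₂, hφ₂mono, hφ₂tendsto⟩ :=
    hKccomp.tendsto_subseq hmemKc
  set ψ : ℕ → ℕ := φ₁ ∘ φ₂ with hψdef
  have hψmono : StrictMono ψ := hφ₁mono.comp hφ₂mono
  set w' : O := t⁻¹ • w₀ with hw'def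
  have hju' : Tendsto (fun m => j ((u (ψ m) : Z) - (g (ψ m) : Z))) atTop (nhds w') := by
    have h1 : Tendsto (fun m => t⁻¹ • (t • j ((u (φ₁ (φ₂ m)) : Z) - (g (φ₁ (φ₂ m)) : Z))))
        atTop (nhds (t⁻¹ • w₀)) := hφ₂tendsto.const_smul t⁻¹
    have h2 : ∀ m, t⁻¹ • (t • j ((u (φ₁ (φ₂ m)) : Z) - (g (φ₁ (φ₂ m)) : Z)))
        = j ((u (ψ m) : Z) - (g (ψ m) : Z)) := by
      intro m
      rw [smul_smul, inv_mul_cancel₀ ht.ne', one_smul]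
      rfl
    rw [hw'def]
    exact Tendsto.congr h2 h1
  set zg : Z := (zK : Z) with hzgdef
  have hgz2 : Tendsto (fun m => (g (ψ m) : Z)) atTop (nhds zg) :=
    hgz1.comp hφ₂mono.tendsto_atTop
  have hjg2 : Tendsto (fun m => j ((g (ψ m) : Z))) atTop (nhds (j zg)) :=
    (j.continuous.tendsto zg).comp hgz2
  set w : O := w' + j zg with hwdef
  have hju : Tendsto (fun m => j ((u (ψ m) : Z))) atTop (nhds w) := by
    have h1 := hju'.add hjg2
    have h2 : ∀ m, j ((u (ψ m) : Z) - (g (ψ m) : Z)) + j ((g (ψ m) : Z))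
        = j ((u (ψ m) : Z)) := by
      intro m
      rw [map_sub]
      abel
    rw [hwdef]
    exact Tendsto.congr h2 h1
  have hnψ : Tendsto (fun m => n (ψ m)) atTop atTop := hnt.comp hψmono.tendsto_atTop
  have hψm : ∀ m, m ≤ ψ m := fun m => hψmono.le_apply
  -- key limit identity on the dense subspace
  have hw0key : ∀ uu ∈ Yinf, ⟪A uu, w⟫ + ⟪C w, ι uu⟫ = 0 := by
    intro uu huu
    obtain ⟨useq, hts, htsup⟩ := hYc uu huu
    have htz : Tendsto (fun m => ((useq (n (ψ m)) : X (n (ψ m))) : Z)) atTop (nhds (k uu)) := by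
      rw [tendsto_iff_norm_sub_tendsto_zero]
      exact hts.comp hnψ
    obtain ⟨T₀, hT₀⟩ : ∃ T₀ : ℝ, ∀ m, ‖((useq (n (ψ m)) : X (n (ψ m))) : Z)‖ ≤ T₀ := by
      obtain ⟨T₀, hT₀⟩ := (htz.norm).bddAbove_range
      exact ⟨T₀, fun m => hT₀ ⟨m, rfl⟩⟩
    have hT₀0 : 0 ≤ T₀ := le_trans (norm_nonneg _) (hT₀ 0)
    set F : ∀ i, X i →ₗ[ℝ] ℝ := fun i =>
      ((((innerSL ℝ (A uu)).comp j).toLinearMap).comp (X i).subtype) - aN i (useq i)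
      with hFdef
    have hFval : ∀ i (v : X i), F i v = ⟪A uu, j ((v : Z))⟫ - aN i (useq i) v :=
      fun i v => rfl
    -- term 1
    have hd1 : ∀ m, |⟪A uu, j ((u (ψ m) : Z))⟫ - aN (n (ψ m)) (useq (n (ψ m))) (u (ψ m))|
        ≤ ⨆ v : {v : X (n (ψ m)) // v ≠ 0},
            |⟪A uu, j ((v.1 : Z))⟫ - aN (n (ψ m)) (useq (n (ψ m))) v.1| / ‖(v.1 : Z)‖ := by
      intro m
      have h := le_sup_div (X (n (ψ m))) (F (n (ψ m))) (u (ψ m))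
      rw [hu1 (ψ m), mul_one] at h
      exact h
    have Dd1 : Tendsto (fun m => ⟪A uu, j ((u (ψ m) : Z))⟫
        - aN (n (ψ m)) (useq (n (ψ m))) (u (ψ m))) atTop (nhds 0) := by
      refine squeeze_zero_norm (fun m => ?_) (htsup.comp hnψ)
      simpa [Real.norm_eq_abs] using hd1 m
    -- term 2
    have hd2 : ∀ m, |(aN (n (ψ m)) (u (ψ m)) + cN (n (ψ m)) (u (ψ m))) (useq (n (ψ m)))|
        ≤ ((m:ℝ)+1)⁻¹ * T₀ := by
      intro m
      have h := le_sup_div (X (n (ψ m)))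
        (aN (n (ψ m)) (u (ψ m)) + cN (n (ψ m)) (u (ψ m))) (useq (n (ψ m)))
      refine h.trans ?_
      have h2 : (⨆ v : {v : X (n (ψ m)) // v ≠ 0},
          |(aN (n (ψ m)) (u (ψ m)) + cN (n (ψ m)) (u (ψ m))) v.1| / ‖(v.1 : Z)‖)
          ≤ (((ψ m):ℝ)+1)⁻¹ := hu2 (ψ m)
      have h3 : ((((ψ m):ℝ))+1)⁻¹ ≤ ((m:ℝ)+1)⁻¹ := by
        apply inv_anti₀ (by positivity)
        have h4 : (m:ℝ) ≤ ((ψ m : ℕ) : ℝ) := Nat.cast_le.mpr (hψm m)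
        linarith
      have hsupnn : (0:ℝ) ≤ ⨆ v : {v : X (n (ψ m)) // v ≠ 0},
          |(aN (n (ψ m)) (u (ψ m)) + cN (n (ψ m)) (u (ψ m))) v.1| / ‖(v.1 : Z)‖ :=
        Real.iSup_nonneg fun v => div_nonneg (abs_nonneg _) (norm_nonneg _)
      exact mul_le_mul (h2.trans h3) (hT₀ m) (norm_nonneg _) (by positivity)
    have Dd2 : Tendsto (fun m => (aN (n (ψ m)) (u (ψ m)) + cN (n (ψ m)) (u (ψ m)))
        (useq (n (ψ m)))) atTop (nhds 0) := by
      refine squeeze_zero_norm (fun m => by simpa [Real.norm_eq_abs] using hd2 m) ?_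
      have h1 : Tendsto (fun m : ℕ => ((m:ℝ)+1)⁻¹) atTop (nhds 0) := by
        have := tendsto_one_div_add_atTop_nhds_zero_nat (𝕜 := ℝ)
        simpa [one_div] using this
      simpa using h1.mul_const T₀
    -- term 3
    have hd3 : ∀ m, |⟪C (j ((u (ψ m) : Z))), j ((useq (n (ψ m)) : Z))⟫
        - cN (n (ψ m)) (u (ψ m)) (useq (n (ψ m)))| ≤ |ε (n (ψ m))| * T₀ := by
      intro m
      have h := hεb (n (ψ m)) (u (ψ m)) (useq (n (ψ m)))
      rw [hu1 (ψ m)] at h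
      refine h.trans ?_
      have : ε (n (ψ m)) * 1 * ‖((useq (n (ψ m)) : X (n (ψ m))) : Z)‖
          = ε (n (ψ m)) * ‖((useq (n (ψ m)) : X (n (ψ m))) : Z)‖ := by ring
      rw [this]
      exact mul_le_mul (le_abs_self _) (hT₀ m) (norm_nonneg _) (abs_nonneg _)
    have Dd3 : Tendsto (fun m => ⟪C (j ((u (ψ m) : Z))), j ((useq (n (ψ m)) : Z))⟫
        - cN (n (ψ m)) (u (ψ m)) (useq (n (ψ m)))) atTop (nhds 0) := by
      refine squeeze_zero_norm (fun m => by simpa [Real.norm_eq_abs] using hd3 m) ?_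
      have h1 : Tendsto (fun m => |ε (n (ψ m))|) atTop (nhds 0) := by
        have := (hε0.comp hnψ).abs
        simpa using this
      simpa using h1.mul_const T₀
    -- the combined expression tends to 0
    have hsum : Tendsto (fun m => ⟪A uu, j ((u (ψ m) : Z))⟫
        + ⟪C (j ((u (ψ m) : Z))), j ((useq (n (ψ m)) : Z))⟫) atTop (nhds 0) := by
      have h := (Dd1.add Dd2).add Dd3
      rw [add_zero, add_zero] at h
      refine Tendsto.congr (fun m => ?_) h
      have hsymm : aN (n (ψ m)) (useq (n (ψ m))) (u (ψ m))
          = aN (n (ψ m)) (u (ψ m)) (useq (n (ψ m))) := haNsym _ _ _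
      simp only [LinearMap.add_apply]
      rw [hsymm]
      ring
    -- and also to the limit expression
    have hlim2 : Tendsto (fun m => ⟪A uu, j ((u (ψ m) : Z))⟫
        + ⟪C (j ((u (ψ m) : Z))), j ((useq (n (ψ m)) : Z))⟫) atTop
        (nhds (⟪A uu, w⟫ + ⟪C w, ι uu⟫)) := by
      have T1 : Tendsto (fun m => ⟪A uu, j ((u (ψ m) : Z))⟫) atTop (nhds ⟪A uu, w⟫) :=
        Tendsto.inner tendsto_const_nhds hju
      have T2 : Tendsto (fun m => j ((useq (n (ψ m)) : Z))) atTop (nhds (ι uu)) := by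
        have := (j.continuous.tendsto (k uu)).comp htz
        rw [hjk uu] at this
        exact this
      have T3 : Tendsto (fun m => C (j ((u (ψ m) : Z)))) atTop (nhds (C w)) :=
        (C.continuous.tendsto w).comp hju
      exact T1.add (Tendsto.inner T3 T2)
    exact tendsto_nhds_unique hlim2 hsum
  -- extend to all of Y by density, conclude w = 0
  have hwall : ∀ x : Y, ⟪A x + C (ι x), w⟫ = 0 := by
    have hcont : Continuous (fun x : Y => ⟪A x + C (ι x), w⟫) := by
      exact Continuous.inner ((A.continuous).add (C.continuous.comp ι.continuous))
        continuous_const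
    have hclosed : IsClosed {x : Y | ⟪A x + C (ι x), w⟫ = 0} :=
      isClosed_eq hcont continuous_const
    have hsub : (Yinf : Set Y) ⊆ {x : Y | ⟪A x + C (ι x), w⟫ = 0} := by
      intro x hx
      have h1 := hw0key x hx
      have h2 : ⟪C w, ι x⟫ = ⟪C (ι x), w⟫ := by
        rw [hCsym w (ι x), real_inner_comm]
      show ⟪A x + C (ι x), w⟫ = 0
      rw [inner_add_left]
      rw [h2] at h1
      linarith
    have : closure (Yinf : Set Y) ⊆ {x : Y | ⟪A x + C (ι x), w⟫ = 0} :=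
      hclosed.closure_subset_iff.mpr hsub
    intro x
    exact this (hYd.closure_eq ▸ Set.mem_univ x : x ∈ closure (Yinf : Set Y))
  have hw0 : w = 0 := by
    have hall : ∀ o : O, ⟪o, w⟫ = 0 := by
      have hcont : Continuous (fun o : O => ⟪o, w⟫) :=
        Continuous.inner continuous_id continuous_const
      have hclosed : IsClosed {o : O | ⟪o, w⟫ = 0} := isClosed_eq hcont continuous_const
      have hsub : Set.range (fun x : Y => A x + C (ι x)) ⊆ {o : O | ⟪o, w⟫ = 0} := by
        rintro _ ⟨x, rfl⟩
        exact hwall x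
      have h := hclosed.closure_subset_iff.mpr hsub
      intro o
      exact h (hACdr.closure_eq ▸ Set.mem_univ o : o ∈ closure (Set.range _))
    have := hall w
    exact inner_self_eq_zero.mp this
  -- orthogonality in the limit: the kernel part vanishes
  have hzg0 : zg = 0 := by
    have horthlim : ⟪w', j zg⟫ = 0 := by
      have h1 : Tendsto (fun m => ⟪j ((u (ψ m) : Z) - (g (ψ m) : Z)), j ((g (ψ m) : Z))⟫)
          atTop (nhds ⟪w', j zg⟫) := Tendsto.inner hju' hjg2
      have h2 : ∀ m, ⟪j ((u (ψ m) : Z) - (g (ψ m) : Z)), j ((g (ψ m) : Z))⟫ = 0 := by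
        intro m
        exact hgorth (ψ m) (g (ψ m)) (hgker (ψ m))
      have h3 : Tendsto (fun m => ⟪j ((u (ψ m) : Z) - (g (ψ m) : Z)), j ((g (ψ m) : Z))⟫)
          atTop (nhds 0) := by
        rw [tendsto_congr h2]
        exact tendsto_const_nhds
      exact tendsto_nhds_unique h1 h3
    have hw' : w' = -(j zg) := by
      have h4 : w' + j zg = 0 := by rw [← hwdef, hw0]
      exact eq_neg_of_add_eq_zero_left h4
    rw [hw', inner_neg_left, neg_eq_zero, inner_self_eq_zero] at horthlim
    have : j zg = j 0 := by rw [horthlim, map_zero]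
    exact hjinj this
  have hw'0 : w' = 0 := by
    have h4 : w' + j zg = 0 := by rw [← hwdef, hw0]
    rw [hzg0, map_zero, add_zero] at h4
    exact h4
  -- both parts of the decomposition tend to 0
  have hg0 : Tendsto (fun m => ‖(g (ψ m) : Z)‖) atTop (nhds 0) := by
    have := hgz2.norm
    rw [hzg0, norm_zero] at this
    exact this
  have hjut0 : Tendsto (fun m => j ((u (ψ m) : Z))) atTop (nhds 0) := by
    rw [← hw0]
    exact hju
  -- stability gives convergence of the complement part in Z
  have hu'0 : Tendsto (fun m => ‖(u (ψ m) : Z) - (g (ψ m) : Z)‖) atTop (nhds 0) := by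
    have hkey : ∀ m, c * ‖(u (ψ m) : Z) - (g (ψ m) : Z)‖
        ≤ ((m:ℝ)+1)⁻¹ + (‖C (j ((u (ψ m) : Z)))‖ * ‖j‖ + |ε (n (ψ m))|) := by
      intro m
      have horthcond : ∀ g' : X (n (ψ m)), (∀ v, aN (n (ψ m)) g' v = 0) →
          ⟪j ((u (ψ m) - g (ψ m) : X (n (ψ m))) : Z), j ((g' : Z))⟫ = 0 := by
        intro g' hg'
        simpa using hgorth (ψ m) g' hg'
      have h1 := hstab' (n (ψ m)) (u (ψ m) - g (ψ m)) horthcond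
      have hcoe : (((u (ψ m) - g (ψ m) : X (n (ψ m)))) : Z)
          = (u (ψ m) : Z) - (g (ψ m) : Z) := rfl
      rw [hcoe] at h1
      refine h1.trans ?_
      refine sup_div_le (X (n (ψ m))) _ ?_ ?_
      · have hh : (0:ℝ) ≤ ((m:ℝ)+1)⁻¹ := by positivity
        have hh2 : (0:ℝ) ≤ ‖C (j ((u (ψ m) : Z)))‖ * ‖j‖ + |ε (n (ψ m))| := by positivity
        linarith
      · intro v
        have hv1 : |aN (n (ψ m)) (u (ψ m) - g (ψ m)) v|
            = |aN (n (ψ m)) (u (ψ m)) v| := by rw [hfeq (ψ m)]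
        rw [hv1]
        have h3 : |aN (n (ψ m)) (u (ψ m)) v|
            ≤ |(aN (n (ψ m)) (u (ψ m)) + cN (n (ψ m)) (u (ψ m))) v|
              + |cN (n (ψ m)) (u (ψ m)) v| := by
          have heq2 : aN (n (ψ m)) (u (ψ m)) v
              = (aN (n (ψ m)) (u (ψ m)) + cN (n (ψ m)) (u (ψ m))) v
                - cN (n (ψ m)) (u (ψ m)) v := by simp
          rw [heq2]
          exact abs_sub _ _
        have h4 := hsup1 (ψ m) v
        have h4' : |(aN (n (ψ m)) (u (ψ m)) + cN (n (ψ m)) (u (ψ m))) v|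
            ≤ ((m:ℝ)+1)⁻¹ * ‖(v : Z)‖ := by
          refine (h4.trans ?_)
          have h5 : ((((ψ m):ℝ))+1)⁻¹ ≤ ((m:ℝ)+1)⁻¹ := by
            apply inv_anti₀ (by positivity)
            have h6 : (m:ℝ) ≤ ((ψ m : ℕ) : ℝ) := Nat.cast_le.mpr (hψm m)
            linarith
          exact mul_le_mul_of_nonneg_right h5 (norm_nonneg _)
        -- cN bound in terms of ‖C (j u)‖
        have h7 : |cN (n (ψ m)) (u (ψ m)) v|
            ≤ (‖C (j ((u (ψ m) : Z)))‖ * ‖j‖ + |ε (n (ψ m))|) * ‖(v : Z)‖ := by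
          have h8 : |cN (n (ψ m)) (u (ψ m)) v|
              ≤ |⟪C (j ((u (ψ m) : Z))), j ((v : Z))⟫|
                + |⟪C (j ((u (ψ m) : Z))), j ((v : Z))⟫ - cN (n (ψ m)) (u (ψ m)) v| := by
            calc |cN (n (ψ m)) (u (ψ m)) v|
                = |⟪C (j ((u (ψ m) : Z))), j ((v : Z))⟫
                  + (cN (n (ψ m)) (u (ψ m)) v - ⟪C (j ((u (ψ m) : Z))), j ((v : Z))⟫)| := by
                  congr 1; ring
              _ ≤ _ := (abs_add_le _ _).trans (by rw [abs_sub_comm]; )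
          have h9 := hip (n (ψ m)) (u (ψ m)) v
          have h10 := hεb (n (ψ m)) (u (ψ m)) v
          rw [hu1 (ψ m)] at h10
          have h11 : ε (n (ψ m)) * 1 * ‖(v : Z)‖ ≤ |ε (n (ψ m))| * ‖(v : Z)‖ := by
            have := le_abs_self (ε (n (ψ m)))
            nlinarith [norm_nonneg ((v : Z))]
          nlinarith [norm_nonneg ((v : Z)), norm_nonneg (C (j ((u (ψ m) : Z))))]
        calc |aN (n (ψ m)) (u (ψ m)) v|
            ≤ ((m:ℝ)+1)⁻¹ * ‖(v : Z)‖
              + (‖C (j ((u (ψ m) : Z)))‖ * ‖j‖ + |ε (n (ψ m))|) * ‖(v : Z)‖ := by linarith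
          _ = (((m:ℝ)+1)⁻¹ + (‖C (j ((u (ψ m) : Z)))‖ * ‖j‖ + |ε (n (ψ m))|)) * ‖(v : Z)‖ := by
              ring
    -- the right-hand side tends to 0
    have hrhs : Tendsto (fun m : ℕ => ((m:ℝ)+1)⁻¹
        + (‖C (j ((u (ψ m) : Z)))‖ * ‖j‖ + |ε (n (ψ m))|)) atTop (nhds 0) := by
      have h1 : Tendsto (fun m : ℕ => ((m:ℝ)+1)⁻¹) atTop (nhds 0) := by
        have := tendsto_one_div_add_atTop_nhds_zero_nat (𝕜 := ℝ)
        simpa [one_div] using this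
      have h2 : Tendsto (fun m => ‖C (j ((u (ψ m) : Z)))‖ * ‖j‖) atTop (nhds 0) := by
        have h3 : Tendsto (fun m => C (j ((u (ψ m) : Z)))) atTop (nhds (C 0)) :=
          (C.continuous.tendsto 0).comp hjut0
        rw [map_zero] at h3
        have := h3.norm
        rw [norm_zero] at this
        simpa using this.mul_const ‖j‖
      have h4 : Tendsto (fun m => |ε (n (ψ m))|) atTop (nhds 0) := by
        have := (hε0.comp hnψ).abs
        simpa using this
      have := h1.add (h2.add h4)
      simpa using this
    have hsq : ∀ m, ‖(u (ψ m) : Z) - (g (ψ m) : Z)‖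
        ≤ c⁻¹ * (((m:ℝ)+1)⁻¹ + (‖C (j ((u (ψ m) : Z)))‖ * ‖j‖ + |ε (n (ψ m))|)) := by
      intro m
      have h1 := hkey m
      rw [← le_div_iff₀' hcpos] at h1
      rw [div_eq_inv_mul] at h1
      exact h1
    have hrhs2 : Tendsto (fun m : ℕ => c⁻¹ * (((m:ℝ)+1)⁻¹
        + (‖C (j ((u (ψ m) : Z)))‖ * ‖j‖ + |ε (n (ψ m))|))) atTop (nhds 0) := by
      simpa using hrhs.const_mul c⁻¹
    exact squeeze_zero (fun m => norm_nonneg _) hsq hrhs2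
  -- final contradiction : ‖u (ψ m)‖ = 1 but u (ψ m) → 0
  have hfinal : Tendsto (fun m => ‖(u (ψ m) : Z) - (g (ψ m) : Z)‖ + ‖(g (ψ m) : Z)‖)
      atTop (nhds 0) := by simpa using hu'0.add hg0
  have hone : ∀ m, (1:ℝ) ≤ ‖(u (ψ m) : Z) - (g (ψ m) : Z)‖ + ‖(g (ψ m) : Z)‖ := by
    intro m
    have h1 : (u (ψ m) : Z) = ((u (ψ m) : Z) - (g (ψ m) : Z)) + (g (ψ m) : Z) := by abel
    calc (1:ℝ) = ‖(u (ψ m) : Z)‖ := (hu1 (ψ m)).symm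
      _ = ‖((u (ψ m) : Z) - (g (ψ m) : Z)) + (g (ψ m) : Z)‖ := by rw [← h1]
      _ ≤ _ := norm_add_le _ _
  have : (1:ℝ) ≤ 0 := ge_of_tendsto hfinal (Eventually.of_forall hone)
  linarith
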